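/- Reflection property of the quantum dilogarithm: G_b(x)·G_b(Q − x) = e^{πi x(x−Q)} for every x ∈ ℂ at which both factors are finite (equivalently, as an identity of meromorphic functions on ℂ). -/

import Mathlib

noncomputable section

open Complex MeasureTheory Filter Real
open scoped Topology

/-- The integrand of the contour-integral defining the quantum dilogarithm:
`e^{πtz} / ((e^{πbt}−1)(e^{πb⁻¹t}−1) t)`. -/
def qdIntegrand (b : ℝ) (z t : ℂ) : ℂ :=
  Complex.exp (↑π * t * z) /
    ((Complex.exp (↑π * ↑b * t) - 1) * (Complex.exp (↑π * (↑b)⁻¹ * t) - 1) * t)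

/-- Radius of the small semicircle above `t = 0` (any sufficiently small radius
gives the same value; we fix one symmetric in `b ↔ b⁻¹`). -/
def qdRadius (b : ℝ) : ℝ := min b b⁻¹ / 2

/-- The contour integral `∫_Ω e^{πtz}/((e^{πbt}−1)(e^{πb⁻¹t}−1)) dt/t`, where
the contour `Ω` runs along `ℝ` from `−∞` to `+∞`, deformed by a small semicircle
passing above the singularity at `t = 0`. -/
def qdContour (b : ℝ) (z : ℂ) : ℂ :=
  (∫ t in Set.Iic (-(qdRadius b)), qdIntegrand b z (t : ℂ)) +
  (∫ t in Set.Ici (qdRadius b), qdIntegrand b z (t : ℂ)) -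
  Complex.I * ∫ θ in (0:ℝ)..π,
    qdIntegrand b z ((qdRadius b : ℂ) * Complex.exp (Complex.I * (θ : ℝ))) *
      ((qdRadius b : ℂ) * Complex.exp (Complex.I * (θ : ℝ)))

/-- `ζ_b = exp((πi/2)((b² + b^{-2})/6 + 1/2))`. -/
def zetab (b : ℝ) : ℂ :=
  Complex.exp (↑π * Complex.I / 2 * (((b : ℂ)^2 + ((b : ℂ)⁻¹)^2) / 6 + 1 / 2))

/-- `Q = b + b⁻¹`. -/
def Qb (b : ℝ) : ℝ := b + b⁻¹

/-- The quantum dilogarithm on the strip `0 < Re z < Q`: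
`G_b(z) = conj(ζ_b) · exp(−∫_Ω …)`. -/
def Gstrip (b : ℝ) (z : ℂ) : ℂ :=
  (starRingEnd ℂ) (zetab b) * Complex.exp (-qdContour b z)

/-- `G : ℂ → ℂ` is (a representative of) the meromorphic continuation of the
quantum dilogarithm `G_b`: it is meromorphic on all of `ℂ`, analytic away from
the lattice `{−nb − mb⁻¹ : n, m ∈ ℤ≥0}` of poles, and agrees with the
contour-integral formula on the strip `0 < Re z < Q`. -/
def IsGb (b : ℝ) (G : ℂ → ℂ) : Prop :=
  (∀ z : ℂ, MeromorphicAt G z) ∧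
  (∀ z : ℂ, (∀ n m : ℕ, z ≠ -(n : ℂ) * (b : ℂ) - (m : ℂ) * ((b : ℂ))⁻¹) →
    AnalyticAt ℂ G z) ∧
  (∀ z : ℂ, 0 < z.re → z.re < Qb b → G z = Gstrip b z)



-- ===== auxiliary development =====

/-- `(exp w - 1)/w`, extended by `1` at `0`. -/
def eone : ℂ → ℂ := fun w => if w = 0 then 1 else (Complex.exp w - 1) / w

lemma eone_zero : eone 0 = 1 := by simp [eone]

lemma mul_eone (w : ℂ) : w * eone w = Complex.exp w - 1 := by
  rcases eq_or_ne w 0 with rfl | h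
  · simp
  · simp [eone, h, mul_div_cancel₀ _ h, mul_comm]

lemma exp_ne_one {w : ℂ} (h0 : w ≠ 0) (h : ‖w‖ < 2 * π) : Complex.exp w ≠ 1 := by
  intro hw
  obtain ⟨n, rfl⟩ := Complex.exp_eq_one_iff.mp hw
  rcases eq_or_ne n 0 with rfl | hn
  · simp at h0
  · have : (1 : ℝ) ≤ |(n : ℝ)| := by
      rcases Int.one_le_abs (by exact_mod_cast hn) with h'
      exact_mod_cast h'
    have habs : ‖(n : ℂ) * (2 * ↑π * Complex.I)‖ = |(n : ℝ)| * (2 * π) := by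
      rw [norm_mul, norm_mul, norm_mul]
      simp [Complex.norm_real, abs_of_pos Real.pi_pos]
    rw [habs] at h
    nlinarith [Real.pi_pos]

lemma eone_ne_zero {w : ℂ} (h : ‖w‖ < 2 * π) : eone w ≠ 0 := by
  rcases eq_or_ne w 0 with rfl | h0
  · simp [eone]
  · simp only [eone, if_neg h0]
    exact div_ne_zero (sub_ne_zero.mpr (exp_ne_one h0 h)) h0

lemma continuousAt_eone_zero : ContinuousAt eone 0 := by
  have hd : HasDerivAt Complex.exp 1 0 := by simpa using Complex.hasDerivAt_exp 0
  have hs := hasDerivAt_iff_tendsto_slope.mp hd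
  have heq : ∀ w : ℂ, w ≠ 0 → slope Complex.exp 0 w = eone w := by
    intro w hw
    simp [slope, eone, hw, Complex.exp_zero, vsub_eq_sub, div_eq_inv_mul, mul_comm]
  have h1 : Tendsto eone (𝓝[≠] (0:ℂ)) (𝓝 1) := by
    refine hs.congr' ?_
    filter_upwards [self_mem_nhdsWithin] with w hw
    exact heq w hw
  rw [ContinuousAt, eone_zero]
  rw [← nhdsNE_sup_pure (0:ℂ), Filter.tendsto_sup]
  refine ⟨h1, tendsto_pure_left.mpr fun s hs => ?_⟩
  simpa [eone_zero] using mem_of_mem_nhds hs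

lemma analyticAt_eone (w : ℂ) : AnalyticAt ℂ eone w := by
  rcases eq_or_ne w 0 with rfl | hw
  · apply Complex.analyticAt_of_differentiable_on_punctured_nhds_of_continuousAt
    · filter_upwards [self_mem_nhdsWithin] with z hz
      have : DifferentiableAt ℂ (fun w => (Complex.exp w - 1) / w) z :=
        ((Complex.differentiable_exp z).sub_const 1).div differentiableAt_id hz
      refine this.congr_of_eventuallyEq ?_
      filter_upwards [isOpen_compl_singleton.mem_nhds hz] with u hu
      simp [eone, if_neg (Set.mem_compl_singleton_iff.mp hu)]
    · exact continuousAt_eone_zero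
  · have : AnalyticAt ℂ (fun w => (Complex.exp w - 1) / w) w := by
      exact ((analyticAt_cexp.sub analyticAt_const).div analyticAt_id hw)
    refine this.congr ?_
    filter_upwards [isOpen_compl_singleton.mem_nhds hw] with u hu
    simp [eone, if_neg (Set.mem_compl_singleton_iff.mp hu)]

lemma differentiable_eone : Differentiable ℂ eone := fun w => (analyticAt_eone w).differentiableAt

lemma analyticAt_deriv {f : ℂ → ℂ} {x : ℂ} (hf : AnalyticAt ℂ f x) :
    AnalyticAt ℂ (deriv f) x := by
  obtain ⟨s, hs_mem, hset⟩ := hf.eventually_analyticAt.exists_mem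
  exact (AnalyticOnNhd.deriv (fun z hz => hset z hz)) x (mem_of_mem_nhds hs_mem)

lemma differentiable_deriv_eone : Differentiable ℂ (deriv eone) :=
  fun w => (analyticAt_deriv (analyticAt_eone w)).differentiableAt

lemma differentiable_deriv2_eone : Differentiable ℂ (deriv (deriv eone)) :=
  fun w => (analyticAt_deriv (analyticAt_deriv (analyticAt_eone w))).differentiableAt

lemma eone_E1 (w : ℂ) : eone w + w * deriv eone w = Complex.exp w := by
  have h : deriv (fun w => w * eone w) w = deriv (fun w => Complex.exp w - 1) w := by
    apply Filter.EventuallyEq.deriv_eq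
    exact Filter.Eventually.of_forall mul_eone
  rw [deriv_sub_const, Complex.deriv_exp] at h
  rw [deriv_fun_mul differentiableAt_fun_id (differentiable_eone w)] at h
  simpa using h

lemma eone_E2 (w : ℂ) : 2 * deriv eone w + w * deriv (deriv eone) w = Complex.exp w := by
  have h : deriv (fun w => eone w + w * deriv eone w) w = deriv Complex.exp w := by
    apply Filter.EventuallyEq.deriv_eq
    exact Filter.Eventually.of_forall eone_E1
  rw [Complex.deriv_exp] at h
  rw [deriv_fun_add (differentiable_eone w)
      (differentiableAt_fun_id.fun_mul (differentiable_deriv_eone w)),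
    deriv_fun_mul differentiableAt_fun_id (differentiable_deriv_eone w)] at h
  simp only [deriv_id''] at h
  rw [← h]; ring

lemma eone_E3 (w : ℂ) :
    3 * deriv (deriv eone) w + w * deriv (deriv (deriv eone)) w = Complex.exp w := by
  have h : deriv (fun w => 2 * deriv eone w + w * deriv (deriv eone) w) w
      = deriv Complex.exp w := by
    apply Filter.EventuallyEq.deriv_eq
    exact Filter.Eventually.of_forall eone_E2
  rw [Complex.deriv_exp] at h
  rw [deriv_fun_add ((differentiable_deriv_eone w).const_mul 2)
      (differentiableAt_fun_id.fun_mul (differentiable_deriv2_eone w)),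
    deriv_const_mul_field, deriv_fun_mul differentiableAt_fun_id (differentiable_deriv2_eone w)] at h
  simp only [deriv_id''] at h
  rw [← h]; ring

lemma deriv_eone_zero : deriv eone 0 = 1 / 2 := by
  have := eone_E2 0; simp at this; linear_combination this / 2

lemma deriv2_eone_zero : deriv (deriv eone) 0 = 1 / 3 := by
  have := eone_E3 0; simp at this; linear_combination this / 3

lemma deriv_comp_const_mul {f : ℂ → ℂ} (hf : Differentiable ℂ f) (c t : ℂ) :
    deriv (fun t => f (c * t)) t = c * deriv f (c * t) := by
  have h1 : HasDerivAt (fun t : ℂ => c * t) c t := by simpa using (hasDerivAt_id t).const_mul c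
  have h2 := (hf (c * t)).hasDerivAt.comp t h1
  exact h2.deriv.trans (mul_comm _ _)

lemma deriv2_mul {f g : ℂ → ℂ} {x : ℂ} (hf : AnalyticAt ℂ f x) (hg : AnalyticAt ℂ g x) :
    deriv (deriv (fun t => f t * g t)) x
      = deriv (deriv f) x * g x + 2 * (deriv f x * deriv g x) + f x * deriv (deriv g) x := by
  have hev : deriv (fun t => f t * g t)
      =ᶠ[𝓝 x] fun t => deriv f t * g t + f t * deriv g t := by
    filter_upwards [hf.eventually_analyticAt, hg.eventually_analyticAt] with t ht hgt
    exact deriv_mul ht.differentiableAt hgt.differentiableAt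
  rw [hev.deriv_eq]
  rw [deriv_fun_add ((analyticAt_deriv hf).differentiableAt.fun_mul hg.differentiableAt)
      (hf.differentiableAt.fun_mul (analyticAt_deriv hg).differentiableAt),
    deriv_fun_mul (analyticAt_deriv hf).differentiableAt hg.differentiableAt,
    deriv_fun_mul hf.differentiableAt (analyticAt_deriv hg).differentiableAt]
  ring

lemma analyticAt_ec (c x : ℂ) : AnalyticAt ℂ (fun t => eone (c * t)) x :=
  (analyticAt_eone (c * x)).comp (analyticAt_const.mul analyticAt_id)

lemma deriv_ec (c : ℂ) :
    deriv (fun t => eone (c * t)) = fun t => c * deriv eone (c * t) :=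
  funext fun t => deriv_comp_const_mul differentiable_eone c t

lemma deriv2_ec (c t : ℂ) :
    deriv (deriv (fun t => eone (c * t))) t = c ^ 2 * deriv (deriv eone) (c * t) := by
  rw [deriv_ec]
  rw [deriv_const_mul_field, deriv_comp_const_mul differentiable_deriv_eone]
  ring

/-- The regularized denominator `W(t) = π² eone(πbt) eone(πb⁻¹t)`. -/
def Wfun (b : ℝ) : ℂ → ℂ :=
  fun t => ((π : ℂ) ^ 2 * eone (↑π * ↑b * t)) * eone (↑π * (↑b)⁻¹ * t)

/-- The analytic numerator `F = e^{πtz}/W(t)`, equal to `t³·(integrand)`. -/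
def Ffun (b : ℝ) (z : ℂ) : ℂ → ℂ := fun t => Complex.exp (↑π * t * z) / Wfun b t

lemma analyticAt_Wfun (b : ℝ) (x : ℂ) : AnalyticAt ℂ (Wfun b) x :=
  ((analyticAt_const.mul (analyticAt_ec _ x)).mul (analyticAt_ec _ x))

lemma Wfun_zero (b : ℝ) : Wfun b 0 = (π : ℂ) ^ 2 := by
  simp [Wfun, eone_zero]

lemma deriv_Wfun_zero (b : ℝ) :
    deriv (Wfun b) 0 = (π : ℂ) ^ 2 * ((↑π * ↑b + ↑π * (↑b)⁻¹) / 2) := by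
  have h1 : DifferentiableAt ℂ (fun t => (π : ℂ) ^ 2 * eone (↑π * ↑b * t)) 0 :=
    (analyticAt_const.mul (analyticAt_ec _ 0)).differentiableAt
  have h2 : DifferentiableAt ℂ (fun t : ℂ => eone (↑π * (↑b)⁻¹ * t)) 0 :=
    (analyticAt_ec _ 0).differentiableAt
  unfold Wfun
  rw [deriv_fun_mul h1 h2, deriv_const_mul_field,
    deriv_comp_const_mul differentiable_eone, deriv_comp_const_mul differentiable_eone]
  simp [eone_zero, deriv_eone_zero]
  ring

lemma deriv2_Wfun_zero (b : ℝ) :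
    deriv (deriv (Wfun b)) 0 = (π : ℂ) ^ 2 *
      ((↑π * ↑b) ^ 2 / 3 + (↑π * ↑b) * (↑π * (↑b)⁻¹) / 2 + (↑π * (↑b)⁻¹) ^ 2 / 3) := by
  have key := deriv2_mul (f := fun t => (π : ℂ) ^ 2 * eone (↑π * ↑b * t))
    (g := fun t : ℂ => eone (↑π * (↑b)⁻¹ * t)) (x := 0)
    (analyticAt_const.mul (analyticAt_ec _ 0)) (analyticAt_ec _ 0)
  have e1 : deriv (deriv (fun t => (π : ℂ) ^ 2 * eone (↑π * ↑b * t))) 0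
      = (π : ℂ) ^ 2 * ((↑π * ↑b) ^ 2 * deriv (deriv eone) 0) := by
    rw [deriv_const_mul_field', deriv_const_mul_field, deriv2_ec]
    rw [mul_zero]
  have e2 : deriv (fun t => (π : ℂ) ^ 2 * eone (↑π * ↑b * t)) 0
      = (π : ℂ) ^ 2 * ((↑π * ↑b) * deriv eone 0) := by
    rw [deriv_const_mul_field, deriv_comp_const_mul differentiable_eone, mul_zero]
  have e3 : deriv (fun t : ℂ => eone (↑π * (↑b)⁻¹ * t)) 0
      = (↑π * (↑b)⁻¹) * deriv eone 0 := by
    rw [deriv_comp_const_mul differentiable_eone, mul_zero]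
  have e4 : deriv (deriv (fun t : ℂ => eone (↑π * (↑b)⁻¹ * t))) 0
      = (↑π * (↑b)⁻¹) ^ 2 * deriv (deriv eone) 0 := by
    rw [deriv2_ec, mul_zero]
  unfold Wfun
  rw [key, e1, e2, e3, e4]
  simp [eone_zero, deriv_eone_zero, deriv2_eone_zero]
  ring

lemma hasDerivAt_expz (z t : ℂ) :
    HasDerivAt (fun t => Complex.exp (↑π * t * z)) (Complex.exp (↑π * t * z) * (↑π * z)) t := by
  have h1 : HasDerivAt (fun t : ℂ => ↑π * t * z) (↑π * z) t := by
    simpa using (((hasDerivAt_id t).const_mul (π : ℂ)).mul_const z)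
  exact (Complex.hasDerivAt_exp (↑π * t * z)).comp t h1

lemma analyticAt_expz (z t : ℂ) : AnalyticAt ℂ (fun t => Complex.exp (↑π * t * z)) t :=
  ((analyticAt_const.mul analyticAt_id).mul analyticAt_const).cexp

lemma deriv2_Ffun_zero (b : ℝ) (hb0 : 0 < b) (z : ℂ) :
    deriv (deriv (Ffun b z)) 0
      = z ^ 2 - (↑b + (↑b)⁻¹) * z + ((b : ℂ) ^ 2 + ((b : ℂ)⁻¹) ^ 2) / 6 + 1 / 2 := by
  have hπ : (π : ℂ) ≠ 0 := Complex.ofReal_ne_zero.mpr Real.pi_ne_zero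
  have hb : (b : ℂ) ≠ 0 := Complex.ofReal_ne_zero.mpr (ne_of_gt hb0)
  have hbb : (b : ℂ) * ((b : ℂ))⁻¹ = 1 := mul_inv_cancel₀ hb
  have hWne : Wfun b 0 ≠ 0 := by rw [Wfun_zero]; exact pow_ne_zero 2 hπ
  have hWa := analyticAt_Wfun b 0
  have hFa : AnalyticAt ℂ (Ffun b z) 0 := (analyticAt_expz z 0).div hWa hWne
  have hprod : (fun t => Ffun b z t * Wfun b t) =ᶠ[𝓝 0]
      fun t => Complex.exp (↑π * t * z) := by
    filter_upwards [hWa.continuousAt.eventually_ne hWne] with t ht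
    exact div_mul_cancel₀ _ ht
  have e0 : Ffun b z 0 * Wfun b 0 = 1 := by simpa using hprod.eq_of_nhds
  have e1 : deriv (Ffun b z) 0 * Wfun b 0 + Ffun b z 0 * deriv (Wfun b) 0 = ↑π * z := by
    have h := hprod.deriv_eq
    rw [deriv_fun_mul hFa.differentiableAt hWa.differentiableAt] at h
    rw [h, (hasDerivAt_expz z 0).deriv]
    simp
  have e2 : deriv (deriv (Ffun b z)) 0 * Wfun b 0
      + 2 * (deriv (Ffun b z) 0 * deriv (Wfun b) 0)
      + Ffun b z 0 * deriv (deriv (Wfun b)) 0 = (↑π * z) * (↑π * z) := by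
    have h := hprod.deriv.deriv_eq
    rw [deriv2_mul hFa hWa] at h
    have hE : deriv (fun t => Complex.exp (↑π * t * z)) =
        fun t => Complex.exp (↑π * t * z) * (↑π * z) :=
      funext fun t => (hasDerivAt_expz z t).deriv
    rw [h, hE, deriv_mul_const_field, (hasDerivAt_expz z 0).deriv]
    simp
  rw [Wfun_zero] at e0
  rw [Wfun_zero, deriv_Wfun_zero] at e1
  rw [Wfun_zero, deriv_Wfun_zero, deriv2_Wfun_zero] at e2
  have key : deriv (deriv (Ffun b z)) 0 * (π : ℂ) ^ 2
      = (z ^ 2 - (↑b + (↑b)⁻¹) * z + ((b : ℂ) ^ 2 + ((b : ℂ)⁻¹) ^ 2) / 6 + 1 / 2) * (π : ℂ) ^ 2 := by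
    linear_combination e2 - ((π : ℂ) * ((b : ℂ) + ((b : ℂ))⁻¹)) * e1
      + ((π : ℂ) ^ 2 * (((b : ℂ) ^ 2) / 6 + (((b : ℂ))⁻¹ ^ 2) / 6
          + ((b : ℂ) * ((b : ℂ))⁻¹) / 2)) * e0
      + ((π : ℂ) ^ 2 / 2) * hbb
  exact mul_right_cancel₀ (pow_ne_zero 2 hπ) key

lemma qdRadius_eq {b : ℝ} (hb0 : 0 < b) (hb1 : b < 1) : qdRadius b = b / 2 := by
  have : b ≤ b⁻¹ := le_of_lt (lt_trans hb1 ((one_lt_inv₀ hb0).2 hb1))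
  rw [qdRadius, min_eq_left this]

lemma qdRadius_pos {b : ℝ} (hb0 : 0 < b) (hb1 : b < 1) : 0 < qdRadius b := by
  rw [qdRadius_eq hb0 hb1]; linarith

lemma Wfun_ne_zero {b : ℝ} (hb0 : 0 < b) (hb1 : b < 1) {t : ℂ}
    (ht : ‖t‖ ≤ qdRadius b) : Wfun b t ≠ 0 := by
  have hπ : (π : ℂ) ≠ 0 := Complex.ofReal_ne_zero.mpr Real.pi_ne_zero
  have hb' : (0:ℝ) < b⁻¹ := by positivity
  have hr : qdRadius b = b / 2 := qdRadius_eq hb0 hb1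
  have h1 : ‖(↑π * ↑b * t)‖ < 2 * π := by
    rw [norm_mul, norm_mul]
    simp only [Complex.norm_real, Real.norm_eq_abs, abs_of_pos Real.pi_pos, abs_of_pos hb0]
    rw [hr] at ht
    have h' : b * ‖t‖ ≤ b * (b / 2) := mul_le_mul_of_nonneg_left ht hb0.le
    have h'' : b * ‖t‖ < 1 := by nlinarith
    rw [mul_assoc]
    nlinarith [Real.pi_pos, mul_lt_mul_of_pos_left h'' Real.pi_pos]
  have h2 : ‖(↑π * (↑b)⁻¹ * t)‖ < 2 * π := by
    rw [norm_mul, norm_mul, norm_inv]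
    simp only [Complex.norm_real, Real.norm_eq_abs, abs_of_pos Real.pi_pos, abs_of_pos hb0]
    rw [hr] at ht
    have e : b⁻¹ * (b / 2) = 1 / 2 := by field_simp
    have hb2 : b⁻¹ * ‖t‖ ≤ 1 / 2 := by
      rw [← e]; exact mul_le_mul_of_nonneg_left ht hb'.le
    rw [mul_assoc]
    nlinarith [Real.pi_pos, mul_le_mul_of_nonneg_left hb2 Real.pi_pos.le]
  exact mul_ne_zero (mul_ne_zero (pow_ne_zero 2 hπ) (eone_ne_zero h1)) (eone_ne_zero h2)

lemma qdIntegrand_eq_Ffun {b : ℝ} (hb0 : 0 < b) (z t : ℂ) :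
    qdIntegrand b z t = Ffun b z t / t ^ 3 := by
  have hb : (b : ℂ) ≠ 0 := Complex.ofReal_ne_zero.mpr (ne_of_gt hb0)
  have hbb : (b : ℂ) * ((b : ℂ))⁻¹ = 1 := mul_inv_cancel₀ hb
  have hden : ((Complex.exp (↑π * ↑b * t) - 1) * (Complex.exp (↑π * (↑b)⁻¹ * t) - 1) * t)
      = (((π : ℂ) ^ 2 * eone (↑π * ↑b * t)) * eone (↑π * (↑b)⁻¹ * t)) * t ^ 3 := by
    rw [← mul_eone (↑π * ↑b * t), ← mul_eone (↑π * (↑b)⁻¹ * t)]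
    linear_combination ((π : ℂ) ^ 2 * eone (↑π * ↑b * t) * eone (↑π * (↑b)⁻¹ * t) * t ^ 3) * hbb
  rw [qdIntegrand, hden, Ffun, Wfun, div_div]

lemma circle_qd {b : ℝ} (hb0 : 0 < b) (hb1 : b < 1) (z : ℂ) :
    (∮ t in C(0, qdRadius b), qdIntegrand b z t)
      = ↑π * I * (z ^ 2 - (↑b + (↑b)⁻¹) * z + ((b : ℂ) ^ 2 + ((b : ℂ)⁻¹) ^ 2) / 6 + 1 / 2) := by
  have hr0 : 0 < qdRadius b := qdRadius_pos hb0 hb1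
  set R : NNReal := ⟨qdRadius b, hr0.le⟩ with hR
  have hRr : (R : ℝ) = qdRadius b := rfl
  have hR0 : 0 < R := by exact_mod_cast hr0
  have hd : DifferentiableOn ℂ (Ffun b z) (Metric.closedBall 0 (R : ℝ)) := by
    intro t ht
    rw [Metric.mem_closedBall, Complex.dist_eq, sub_zero] at ht
    exact ((analyticAt_expz z t).div (analyticAt_Wfun b t)
      (Wfun_ne_zero hb0 hb1 ht)).differentiableAt.differentiableWithinAt
  have hps : HasFPowerSeriesOnBall (Ffun b z) (cauchyPowerSeries (Ffun b z) 0 R) 0 R :=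
    hd.hasFPowerSeriesOnBall hR0
  have hcoeff : Nat.factorial 2 • (cauchyPowerSeries (Ffun b z) 0 R 2 fun _ => (1:ℂ))
      = deriv (deriv (Ffun b z)) 0 := by
    rw [hps.factorial_smul (1:ℂ) 2]
    rw [← iteratedDeriv_eq_iteratedFDeriv]
    rw [iteratedDeriv_succ, iteratedDeriv_succ, iteratedDeriv_zero]
  have happ := cauchyPowerSeries_apply (Ffun b z) 0 R 2 (1 : ℂ)
  have h2πI : (2 * (π : ℂ) * I) ≠ 0 := by
    simp [Complex.ofReal_ne_zero.mpr Real.pi_ne_zero, Complex.I_ne_zero]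
  have hX : (cauchyPowerSeries (Ffun b z) 0 (↑R) 2 fun _ => (1:ℂ))
      = deriv (deriv (Ffun b z)) 0 / 2 := by
    rw [nsmul_eq_mul] at hcoeff
    norm_num [Nat.factorial] at hcoeff
    have hc : (cauchyPowerSeries (Ffun b z) 0 ↑R).coeff 2
        = (cauchyPowerSeries (Ffun b z) 0 (↑R) 2 fun _ => (1:ℂ)) := rfl
    rw [hc] at hcoeff
    field_simp
    linear_combination hcoeff
  have hcongr : (∮ t in C(0, (R:ℝ)), qdIntegrand b z t)
      = ∮ t in C(0, (R:ℝ)), ((1:ℂ) / (t - 0)) ^ 2 • (t - 0)⁻¹ • Ffun b z t := by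
    apply circleIntegral.integral_congr hr0.le
    intro t ht
    rw [Metric.mem_sphere, Complex.dist_eq, sub_zero] at ht
    have ht0 : t ≠ 0 := by
      intro h; rw [h] at ht; simp at ht; exact (ne_of_gt hr0) ht.symm
    rw [qdIntegrand_eq_Ffun hb0]
    show Ffun b z t / t ^ 3 = (1 / (t - 0)) ^ 2 • (t - 0)⁻¹ • Ffun b z t
    simp only [smul_eq_mul, sub_zero, one_div]
    rw [inv_pow, ← mul_assoc, ← mul_inv, ← pow_succ, div_eq_mul_inv, mul_comm]
  have hInt : (∮ t in C(0, (R:ℝ)), ((1:ℂ) / (t - 0)) ^ 2 • (t - 0)⁻¹ • Ffun b z t)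
      = (2 * (π:ℂ) * I) * (cauchyPowerSeries (Ffun b z) 0 (↑R) 2 fun _ => (1:ℂ)) := by
    rw [happ, smul_eq_mul, ← mul_assoc, mul_inv_cancel₀ h2πI, one_mul]
  show (∮ t in C(0, (R:ℝ)), qdIntegrand b z t)
      = ↑π * I * (z ^ 2 - (↑b + (↑b)⁻¹) * z + ((b : ℂ) ^ 2 + ((b : ℂ)⁻¹) ^ 2) / 6 + 1 / 2)
  rw [hcongr, hInt, hX, deriv2_Ffun_zero b hb0 z]
  ring

lemma qdIntegrand_reflect {b : ℝ} (hb0 : 0 < b) (z t : ℂ) :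
    qdIntegrand b ((Qb b : ℂ) - z) (-t) = - qdIntegrand b z t := by
  have hb : (b : ℂ) ≠ 0 := Complex.ofReal_ne_zero.mpr (ne_of_gt hb0)
  have hQ : ((Qb b : ℝ) : ℂ) = (b : ℂ) + ((b : ℂ))⁻¹ := by
    rw [Qb]; push_cast; ring
  set A := Complex.exp (↑π * ↑b * t) with hA
  set B := Complex.exp (↑π * (↑b)⁻¹ * t) with hB
  have hAne : A ≠ 0 := Complex.exp_ne_zero _
  have hBne : B ≠ 0 := Complex.exp_ne_zero _
  have hA' : Complex.exp (↑π * ↑b * -t) = A⁻¹ := by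
    rw [hA, ← Complex.exp_neg]; congr 1; ring
  have hB' : Complex.exp (↑π * (↑b)⁻¹ * -t) = B⁻¹ := by
    rw [hB, ← Complex.exp_neg]; congr 1; ring
  have hN' : Complex.exp (↑π * -t * (↑(Qb b) - z))
      = A⁻¹ * B⁻¹ * Complex.exp (↑π * t * z) := by
    rw [hA, hB, ← Complex.exp_neg, ← Complex.exp_neg, ← Complex.exp_add, ← Complex.exp_add]
    congr 1
    rw [hQ]; ring
  simp only [qdIntegrand]
  rw [hA', hB', hN']
  have e1 : A⁻¹ - 1 = -(A⁻¹ * (A - 1)) := by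
    rw [mul_sub, inv_mul_cancel₀ hAne, mul_one]; ring
  have e2 : B⁻¹ - 1 = -(B⁻¹ * (B - 1)) := by
    rw [mul_sub, inv_mul_cancel₀ hBne, mul_one]; ring
  have hD : (A⁻¹ - 1) * (B⁻¹ - 1) * -t = -((A⁻¹ * B⁻¹) * ((A - 1) * (B - 1) * t)) := by
    rw [e1, e2]; ring
  rw [hD, div_neg]
  congr 1
  rw [show A⁻¹ * B⁻¹ * Complex.exp (↑π * t * z)
    = (A⁻¹ * B⁻¹) * Complex.exp (↑π * t * z) from rfl]
  exact mul_div_mul_left _ _ (mul_ne_zero (inv_ne_zero hAne) (inv_ne_zero hBne))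

lemma line_reflect₁ {b : ℝ} (hb0 : 0 < b) (z : ℂ) :
    (∫ t in Set.Iic (-(qdRadius b)), qdIntegrand b ((Qb b : ℂ) - z) (t : ℂ))
      = - ∫ t in Set.Ici (qdRadius b), qdIntegrand b z (t : ℂ) := by
  have h := integral_comp_neg_Iic (-(qdRadius b))
    (fun s : ℝ => qdIntegrand b ((Qb b : ℂ) - z) (-(s : ℂ)))
  simp only [Complex.ofReal_neg, neg_neg] at h
  rw [h]
  rw [MeasureTheory.integral_Ici_eq_integral_Ioi]
  rw [← MeasureTheory.integral_neg]
  apply MeasureTheory.setIntegral_congr_fun measurableSet_Ioi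
  intro x _
  exact qdIntegrand_reflect hb0 z (x : ℂ)

lemma line_reflect₂ {b : ℝ} (hb0 : 0 < b) (z : ℂ) :
    (∫ t in Set.Ici (qdRadius b), qdIntegrand b ((Qb b : ℂ) - z) (t : ℂ))
      = - ∫ t in Set.Iic (-(qdRadius b)), qdIntegrand b z (t : ℂ) := by
  rw [MeasureTheory.integral_Ici_eq_integral_Ioi]
  have h := integral_comp_neg_Ioi (qdRadius b)
    (fun s : ℝ => qdIntegrand b ((Qb b : ℂ) - z) (-(s : ℂ)))
  simp only [Complex.ofReal_neg, neg_neg] at h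
  rw [h]
  rw [← MeasureTheory.integral_neg]
  apply MeasureTheory.setIntegral_congr_fun measurableSet_Iic
  intro x _
  exact qdIntegrand_reflect hb0 z (x : ℂ)

lemma qd_abs_bound₁ {b : ℝ} (hb0 : 0 < b) (hb1 : b < 1) {t : ℂ}
    (ht : ‖t‖ ≤ qdRadius b) : ‖(↑π * ↑b * t)‖ < 2 * π := by
  rw [norm_mul, norm_mul]
  simp only [Complex.norm_real, Real.norm_eq_abs, abs_of_pos Real.pi_pos, abs_of_pos hb0]
  rw [qdRadius_eq hb0 hb1] at ht
  have h' : b * ‖t‖ ≤ b * (b / 2) := mul_le_mul_of_nonneg_left ht hb0.le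
  have h'' : b * ‖t‖ < 1 := by nlinarith
  rw [mul_assoc]
  nlinarith [Real.pi_pos, mul_lt_mul_of_pos_left h'' Real.pi_pos]

lemma qd_abs_bound₂ {b : ℝ} (hb0 : 0 < b) (hb1 : b < 1) {t : ℂ}
    (ht : ‖t‖ ≤ qdRadius b) : ‖(↑π * (↑b)⁻¹ * t)‖ < 2 * π := by
  have hb' : (0:ℝ) < b⁻¹ := by positivity
  rw [norm_mul, norm_mul, norm_inv]
  simp only [Complex.norm_real, Real.norm_eq_abs, abs_of_pos Real.pi_pos, abs_of_pos hb0]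
  rw [qdRadius_eq hb0 hb1] at ht
  have e : b⁻¹ * (b / 2) = 1 / 2 := by field_simp
  have hb2 : b⁻¹ * ‖t‖ ≤ 1 / 2 := by
    rw [← e]; exact mul_le_mul_of_nonneg_left ht hb'.le
  rw [mul_assoc]
  nlinarith [Real.pi_pos, mul_le_mul_of_nonneg_left hb2 Real.pi_pos.le]

lemma qd_denom_ne_zero {b : ℝ} (hb0 : 0 < b) (hb1 : b < 1) {t : ℂ} (ht0 : t ≠ 0)
    (ht : ‖t‖ ≤ qdRadius b) :
    (Complex.exp (↑π * ↑b * t) - 1) * (Complex.exp (↑π * (↑b)⁻¹ * t) - 1) * t ≠ 0 := by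
  have hπ : (π : ℂ) ≠ 0 := Complex.ofReal_ne_zero.mpr Real.pi_ne_zero
  have hb : (b : ℂ) ≠ 0 := Complex.ofReal_ne_zero.mpr (ne_of_gt hb0)
  have h1 : ↑π * ↑b * t ≠ 0 := by
    exact mul_ne_zero (mul_ne_zero hπ hb) ht0
  have h2 : ↑π * (↑b)⁻¹ * t ≠ 0 :=
    mul_ne_zero (mul_ne_zero hπ (inv_ne_zero hb)) ht0
  exact mul_ne_zero (mul_ne_zero
    (sub_ne_zero.mpr (exp_ne_one h1 (qd_abs_bound₁ hb0 hb1 ht)))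
    (sub_ne_zero.mpr (exp_ne_one h2 (qd_abs_bound₂ hb0 hb1 ht)))) ht0

/-- The upper-semicircle parametrization `θ ↦ r e^{iθ}`. -/
def semiMap (b : ℝ) (θ : ℝ) : ℂ := (qdRadius b : ℂ) * Complex.exp (Complex.I * (θ : ℝ))

lemma abs_semiMap {b : ℝ} (hb0 : 0 < b) (hb1 : b < 1) (θ : ℝ) :
    ‖semiMap b θ‖ = qdRadius b := by
  simp [semiMap, Complex.norm_exp, abs_of_pos (qdRadius_pos hb0 hb1)]

lemma semiMap_ne_zero {b : ℝ} (hb0 : 0 < b) (hb1 : b < 1) (θ : ℝ) : semiMap b θ ≠ 0 := by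
  intro h
  have := abs_semiMap hb0 hb1 θ
  rw [h] at this
  simp at this
  exact (ne_of_gt (qdRadius_pos hb0 hb1)) this.symm

lemma continuous_g {b : ℝ} (hb0 : 0 < b) (hb1 : b < 1) (z : ℂ) :
    Continuous (fun θ : ℝ => qdIntegrand b z (semiMap b θ) * semiMap b θ) := by
  have hsm : Continuous (semiMap b) :=
    continuous_const.mul ((continuous_const.mul Complex.continuous_ofReal).cexp)
  have hnum : Continuous (fun θ : ℝ => Complex.exp (↑π * semiMap b θ * z)) :=
    ((continuous_const.mul hsm).mul continuous_const).cexp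
  have hden : Continuous (fun θ : ℝ =>
      (Complex.exp (↑π * ↑b * semiMap b θ) - 1)
        * (Complex.exp (↑π * (↑b)⁻¹ * semiMap b θ) - 1) * semiMap b θ) := by
    exact ((((continuous_const.mul hsm).cexp.sub continuous_const).mul
      ((continuous_const.mul hsm).cexp.sub continuous_const)).mul hsm)
  have hne : ∀ θ : ℝ, (Complex.exp (↑π * ↑b * semiMap b θ) - 1)
      * (Complex.exp (↑π * (↑b)⁻¹ * semiMap b θ) - 1) * semiMap b θ ≠ 0 := fun θ =>
    qd_denom_ne_zero hb0 hb1 (semiMap_ne_zero hb0 hb1 θ) (le_of_eq (abs_semiMap hb0 hb1 θ))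
  exact (hnum.div hden hne).mul hsm

lemma semiMap_add_pi (b : ℝ) (θ : ℝ) : semiMap b (θ + π) = - semiMap b θ := by
  simp only [semiMap]
  rw [Complex.ofReal_add, mul_add, Complex.exp_add]
  rw [show Complex.I * (π : ℂ) = (π : ℂ) * Complex.I from mul_comm _ _, Complex.exp_pi_mul_I]
  ring

lemma reflect_semicircle {b : ℝ} (hb0 : 0 < b) (z : ℂ) (θ : ℝ) :
    qdIntegrand b ((Qb b : ℂ) - z) (semiMap b θ) * semiMap b θ
      = qdIntegrand b z (semiMap b (θ + π)) * semiMap b (θ + π) := by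
  rw [semiMap_add_pi]
  have h := qdIntegrand_reflect hb0 z (-(semiMap b θ))
  rw [neg_neg] at h
  rw [h]; ring

lemma semicircle_sum {b : ℝ} (hb0 : 0 < b) (hb1 : b < 1) (z : ℂ) :
    (∫ θ in (0:ℝ)..π, qdIntegrand b z (semiMap b θ) * semiMap b θ)
      + (∫ θ in (0:ℝ)..π, qdIntegrand b ((Qb b : ℂ) - z) (semiMap b θ) * semiMap b θ)
      = ∫ θ in (0:ℝ)..(2*π), qdIntegrand b z (semiMap b θ) * semiMap b θ := by
  have hcont := continuous_g hb0 hb1 z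
  have h2 : (∫ θ in (0:ℝ)..π, qdIntegrand b ((Qb b : ℂ) - z) (semiMap b θ) * semiMap b θ)
      = ∫ θ in π..(2*π), qdIntegrand b z (semiMap b θ) * semiMap b θ := by
    have hcg : (∫ θ in (0:ℝ)..π, qdIntegrand b ((Qb b : ℂ) - z) (semiMap b θ) * semiMap b θ)
        = ∫ θ in (0:ℝ)..π,
            (fun θ => qdIntegrand b z (semiMap b θ) * semiMap b θ) (θ + π) := by
      apply intervalIntegral.integral_congr
      intro θ _
      exact reflect_semicircle hb0 z θ
    rw [hcg, intervalIntegral.integral_comp_add_right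
      (fun θ => qdIntegrand b z (semiMap b θ) * semiMap b θ) π]
    norm_num
    congr 1
    ring
  rw [h2]
  exact intervalIntegral.integral_add_adjacent_intervals
    (hcont.intervalIntegrable _ _) (hcont.intervalIntegrable _ _)

lemma circle_eq_interval {b : ℝ} (hb0 : 0 < b) (hb1 : b < 1) (z : ℂ) :
    (∮ t in C(0, qdRadius b), qdIntegrand b z t)
      = Complex.I * ∫ θ in (0:ℝ)..(2*π), qdIntegrand b z (semiMap b θ) * semiMap b θ := by
  have hcm : ∀ θ : ℝ, circleMap 0 (qdRadius b) θ = semiMap b θ := by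
    intro θ
    simp only [circleMap, semiMap, zero_add]
    rw [mul_comm (θ:ℂ) Complex.I]
  have hfun : (fun θ : ℝ => deriv (circleMap 0 (qdRadius b)) θ
        • qdIntegrand b z (circleMap 0 (qdRadius b) θ))
      = fun θ : ℝ => Complex.I * (qdIntegrand b z (semiMap b θ) * semiMap b θ) := by
    funext θ
    rw [deriv_circleMap, hcm θ, smul_eq_mul]
    ring
  rw [circleIntegral, hfun, intervalIntegral.integral_const_mul]

lemma qdContour_sum {b : ℝ} (hb0 : 0 < b) (hb1 : b < 1) (z : ℂ) :
    qdContour b z + qdContour b ((Qb b : ℂ) - z)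
      = - ∮ t in C(0, qdRadius b), qdIntegrand b z t := by
  rw [circle_eq_interval hb0 hb1 z]
  have hsum := semicircle_sum hb0 hb1 z
  unfold qdContour
  rw [line_reflect₁ hb0 z, line_reflect₂ hb0 z]
  have e1 : (∫ θ in (0:ℝ)..π, qdIntegrand b z
        ((qdRadius b : ℂ) * Complex.exp (Complex.I * (θ : ℝ))) *
        ((qdRadius b : ℂ) * Complex.exp (Complex.I * (θ : ℝ))))
      = ∫ θ in (0:ℝ)..π, qdIntegrand b z (semiMap b θ) * semiMap b θ := rfl
  have e2 : (∫ θ in (0:ℝ)..π, qdIntegrand b ((Qb b : ℂ) - z)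
        ((qdRadius b : ℂ) * Complex.exp (Complex.I * (θ : ℝ))) *
        ((qdRadius b : ℂ) * Complex.exp (Complex.I * (θ : ℝ))))
      = ∫ θ in (0:ℝ)..π, qdIntegrand b ((Qb b : ℂ) - z) (semiMap b θ) * semiMap b θ := rfl
  rw [e1, e2]
  linear_combination (-Complex.I) * hsum

lemma Gstrip_reflect {b : ℝ} (hb0 : 0 < b) (hb1 : b < 1) (z : ℂ) :
    Gstrip b z * Gstrip b ((Qb b : ℂ) - z)
      = Complex.exp (↑π * Complex.I * z * (z - (Qb b : ℂ))) := by
  have hb : (b : ℂ) ≠ 0 := Complex.ofReal_ne_zero.mpr (ne_of_gt hb0)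
  have hQ : ((Qb b : ℝ) : ℂ) = (b : ℂ) + ((b : ℂ))⁻¹ := by
    rw [Qb]; push_cast; ring
  have hsum := qdContour_sum hb0 hb1 z
  rw [circle_qd hb0 hb1 z] at hsum
  have hconj : (starRingEnd ℂ) (zetab b)
      = Complex.exp (-(↑π * Complex.I / 2 * (((b : ℂ) ^ 2 + ((b : ℂ)⁻¹) ^ 2) / 6 + 1 / 2))) := by
    rw [zetab, ← Complex.exp_conj]
    congr 1
    simp only [map_div₀, map_add, map_mul, map_pow, map_inv₀, map_ofNat,
      Complex.conj_ofReal, Complex.conj_I, map_one]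
    ring
  unfold Gstrip
  rw [hconj]
  rw [← Complex.exp_add, ← Complex.exp_add, ← Complex.exp_add]
  congr 1
  linear_combination -hsum + (↑π * Complex.I * z) * hQ

lemma latticeRe_le {b : ℝ} (hb0 : 0 < b) (n m : ℕ) :
    (-(n : ℂ) * (b : ℂ) - (m : ℂ) * ((b : ℂ))⁻¹).re ≤ 0 := by
  have h : (-(n : ℂ) * (b : ℂ) - (m : ℂ) * ((b : ℂ))⁻¹)
      = (((-(n * b) - m * b⁻¹ : ℝ)) : ℂ) := by push_cast; ring
  rw [h, Complex.ofReal_re]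
  have hb' : (0:ℝ) ≤ b⁻¹ := by positivity
  have h1 : (0:ℝ) ≤ (n:ℝ) * b := by positivity
  have h2 : (0:ℝ) ≤ (m:ℝ) * b⁻¹ := by positivity
  linarith

theorem Gb_reflection' (b : ℝ) (hb0 : 0 < b) (hb1 : b < 1)
    (hirr : Irrational (b ^ 2)) (G : ℂ → ℂ) (hG : IsGb b G) :
    ∀ x : ℂ, AnalyticAt ℂ G x → AnalyticAt ℂ G ((Qb b : ℂ) - x) →
      G x * G ((Qb b : ℂ) - x) = Complex.exp (↑π * Complex.I * x * (x - (Qb b : ℂ))) := by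
  classical
  have hQpos : 0 < Qb b := by
    have : (0:ℝ) < b⁻¹ := by positivity
    rw [Qb]; linarith
  set L : Set ℂ :=
    Set.range (fun p : ℕ × ℕ => -(p.1 : ℂ) * (b : ℂ) - (p.2 : ℂ) * ((b : ℂ))⁻¹) with hL
  set T : Set ℂ := L ∪ (fun w => (Qb b : ℂ) - w) '' L with hT
  have hTcount : T.Countable :=
    (Set.countable_range _).union ((Set.countable_range _).image _)
  set U : Set ℂ := Tᶜ with hU
  have hUconn : IsPreconnected U :=
    (hTcount.isPathConnected_compl_of_one_lt_rank
      (by rw [rank_real_complex]; norm_num)).isConnected.isPreconnected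
  have hUdense : Dense U := hTcount.dense_compl ℝ
  have hnotL : ∀ w : ℂ, w ∉ L →
      (∀ n m : ℕ, w ≠ -(n : ℂ) * (b : ℂ) - (m : ℂ) * ((b : ℂ))⁻¹) := by
    intro w hw n m h
    exact hw ⟨(n, m), h.symm⟩
  set h : ℂ → ℂ := fun w => G w * G ((Qb b : ℂ) - w) with hh
  set g : ℂ → ℂ := fun w => Complex.exp (↑π * Complex.I * w * (w - (Qb b : ℂ))) with hg
  have hGQ : ∀ w : ℂ, ((Qb b : ℂ) - w) ∉ L → AnalyticAt ℂ (fun w => G ((Qb b : ℂ) - w)) w := by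
    intro w hw
    exact AnalyticAt.comp (hG.2.1 _ (hnotL _ hw)) (analyticAt_const.sub (analyticAt_id))
  have hAnal : AnalyticOnNhd ℂ h U := by
    intro w hw
    rw [hU, hT] at hw
    simp only [Set.mem_compl_iff, Set.mem_union, not_or] at hw
    have hw1 : w ∉ L := hw.1
    have hw2 : ((Qb b : ℂ) - w) ∉ L := by
      intro hmem
      exact hw.2 ⟨(Qb b : ℂ) - w, hmem, by ring⟩
    exact (hG.2.1 w (hnotL w hw1)).mul (hGQ w hw2)
  have hgAnal : AnalyticOnNhd ℂ g U := fun w _ =>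
    ((analyticAt_const.mul analyticAt_id).mul (analyticAt_id.sub analyticAt_const)).cexp
  -- the point `Q/2` lies in `U` and in the strip
  set z₀ : ℂ := ((Qb b / 2 : ℝ) : ℂ) with hz₀
  have hz₀U : z₀ ∈ U := by
    rw [hU, hT]
    simp only [Set.mem_compl_iff, Set.mem_union, not_or]
    constructor
    · rintro ⟨⟨n, m⟩, hnm⟩
      simp only at hnm
      have := latticeRe_le hb0 n m
      rw [hnm] at this
      rw [hz₀] at this
      simp only [Complex.ofReal_re] at this
      linarith
    · rintro ⟨w, hwL, hweq⟩
      simp only at hweq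
      obtain ⟨⟨n, m⟩, hnm⟩ := hwL
      simp only at hnm
      have hre := latticeRe_le hb0 n m
      rw [hnm] at hre
      have : ((Qb b : ℂ) - w).re = Qb b - w.re := by
        simp [Complex.sub_re, Complex.ofReal_re]
      rw [hweq] at this
      rw [hz₀, Complex.ofReal_re] at this
      linarith
  -- agreement near `z₀`
  have hSopen : IsOpen {w : ℂ | 0 < w.re ∧ w.re < Qb b} := by
    have : {w : ℂ | 0 < w.re ∧ w.re < Qb b} = Complex.re ⁻¹' Set.Ioo 0 (Qb b) := rfl
    rw [this]
    exact isOpen_Ioo.preimage Complex.continuous_re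
  have hz₀S : z₀ ∈ {w : ℂ | 0 < w.re ∧ w.re < Qb b} := by
    constructor <;> · rw [hz₀]; simp [Complex.ofReal_re]; linarith
  have hEq : h =ᶠ[𝓝 z₀] g := by
    filter_upwards [hSopen.mem_nhds hz₀S] with w hw
    have hw1 : 0 < w.re := hw.1
    have hw2 : w.re < Qb b := hw.2
    have hQw : ((Qb b : ℂ) - w).re = Qb b - w.re := by
      simp [Complex.sub_re, Complex.ofReal_re]
    rw [hh, hg]
    simp only
    rw [hG.2.2 w hw1 hw2, hG.2.2 ((Qb b : ℂ) - w) (by rw [hQw]; linarith) (by rw [hQw]; linarith)]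
    exact Gstrip_reflect hb0 hb1 w
  have hEqOn : Set.EqOn h g U :=
    hAnal.eqOn_of_preconnected_of_eventuallyEq hgAnal hUconn hz₀U hEq
  intro x hx hxQ
  by_cases hxU : x ∈ U
  · exact hEqOn hxU
  · have hhx : ContinuousAt h x :=
      (hx.mul (AnalyticAt.comp hxQ (analyticAt_const.sub analyticAt_id))).continuousAt
    have hgx : ContinuousAt g x :=
      (((analyticAt_const.mul analyticAt_id).mul
        (analyticAt_id.sub analyticAt_const)).cexp).continuousAt
    have hNB : (𝓝[U] x).NeBot := mem_closure_iff_nhdsWithin_neBot.mp (hUdense x)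
    have t1 : Tendsto h (𝓝[U] x) (𝓝 (h x)) := hhx.continuousWithinAt.tendsto
    have t2 : Tendsto g (𝓝[U] x) (𝓝 (g x)) := hgx.continuousWithinAt.tendsto
    have heq' : h =ᶠ[𝓝[U] x] g :=
      eventually_mem_nhdsWithin.mono fun y hy => hEqOn hy
    have t1' : Tendsto g (𝓝[U] x) (𝓝 (h x)) := t1.congr' heq'
    exact tendsto_nhds_unique t1' t2

/-- Reflection property of the quantum dilogarithm:
`G_b(x)·G_b(Q − x) = e^{πix(x−Q)}` at every point where both factors are finite
(i.e. where `G` is analytic at both `x` and `Q − x`). -/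
theorem Gb_reflection (b : ℝ) (hb0 : 0 < b) (hb1 : b < 1)
    (hirr : Irrational (b ^ 2)) (G : ℂ → ℂ) (hG : IsGb b G) :
    ∀ x : ℂ, AnalyticAt ℂ G x → AnalyticAt ℂ G ((Qb b : ℂ) - x) →
      G x * G ((Qb b : ℂ) - x) = Complex.exp (↑π * Complex.I * x * (x - (Qb b : ℂ))) := by
  exact Gb_reflection' b hb0 hb1 hirr G hG

end
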